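/- Let X be an integrable continuous random variable, u its p_u-quantile, and X_u its excess distribution over u. Then for p_u < p < 1, CVaR_p(X) = u + CVaR_{p_t}(X_u) with p_t = 1 - (1-p)/(1-p_u). -/

import Mathlib

open MeasureTheory Set Filter

/-- CVaR decomposition over a threshold: for an integrable continuous random
variable with continuous strictly increasing CDF F, density f, F(u) = p_u, and
excess density f_u(y) = f(u+y)/(1-p_u): for p_u < p < 1,
CVaR_p(X) = u + CVaR_{p_t}(X_u) with p_t = 1-(1-p)/(1-p_u), where CVaR is the
tail expectation beyond the corresponding quantile. -/
theorem cvar_excess (F f : ℝ → ℝ) (u pu p : ℝ)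
    (hF : Continuous F) (hmono : StrictMono F)
    (hbot : Filter.Tendsto F Filter.atBot (nhds 0))
    (htop : Filter.Tendsto F Filter.atTop (nhds 1))
    (hdens : ∀ x, HasDerivAt F (f x) x)
    (hpu : 0 < pu) (hpu1 : pu < 1) (hu : F u = pu) (hp : pu < p) (hp1 : p < 1)
    (hint : MeasureTheory.IntegrableOn (fun x => x * f x)
      (Set.Ioi (sInf {c : ℝ | p ≤ F c}))) :
    (1 / (1 - p)) * ∫ x in Set.Ioi (sInf {c : ℝ | p ≤ F c}), x * f x
      = u + (1 / (1 - (1 - (1 - p) / (1 - pu)))) *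
          ∫ y in Set.Ioi (sInf {y : ℝ |
              1 - (1 - p) / (1 - pu) ≤ (F (u + y) - F u) / (1 - F u)}),
            y * (f (u + y) / (1 - pu)) := by
  have hpu1' : (0:ℝ) < 1 - pu := by linarith
  have hp1' : (0:ℝ) < 1 - p := by linarith
  -- existence of the quantile v with F v = p
  obtain ⟨v, hv⟩ : ∃ v, F v = p := by
    obtain ⟨a, ha⟩ : ∃ a, F a < p := (hbot.eventually (gt_mem_nhds (by linarith : (0:ℝ) < p))).exists
    obtain ⟨b, hb⟩ : ∃ b, p < F b := (htop.eventually (lt_mem_nhds hp1)).exists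
    have := intermediate_value_univ (a := a) (b := b) hF
    obtain ⟨v, hv⟩ := this ⟨le_of_lt ha, le_of_lt hb⟩
    exact ⟨v, hv⟩
  have hle : ∀ c, p ≤ F c ↔ v ≤ c := fun c => by rw [← hv]; exact hmono.le_iff_le
  have hset1 : {c : ℝ | p ≤ F c} = Set.Ici v := by ext c; simpa using hle c
  have hsinf1 : sInf {c : ℝ | p ≤ F c} = v := by rw [hset1, csInf_Ici]
  -- the excess quantile set
  have key : (1 - (1 - p) / (1 - pu)) * (1 - pu) = p - pu := by field_simp; ring
  have hset2 : {y : ℝ | 1 - (1 - p) / (1 - pu) ≤ (F (u + y) - F u) / (1 - F u)}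
      = Set.Ici (v - u) := by
    ext y
    have h1 : (1 - (1 - p) / (1 - pu) ≤ (F (u + y) - F u) / (1 - F u)) ↔ p ≤ F (u + y) := by
      rw [hu, le_div_iff₀ hpu1', key]
      constructor <;> intro h <;> linarith
    simp only [mem_setOf_eq, mem_Ici]
    rw [h1, hle (u + y)]
    constructor <;> intro h <;> linarith
  have hsinf2 : sInf {y : ℝ | 1 - (1 - p) / (1 - pu) ≤ (F (u + y) - F u) / (1 - F u)}
      = v - u := by rw [hset2, csInf_Ici]
  -- nonnegativity of the density
  have fnonneg : ∀ x, 0 ≤ f x := by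
    intro x
    have h := (hasDerivAt_iff_tendsto_slope.mp (hdens x)).mono_left
      (nhdsWithin_mono x (fun y (hy : y ∈ Ioi x) => ne_of_gt hy : Ioi x ⊆ {x}ᶜ))
    refine ge_of_tendsto h (eventually_nhdsWithin_of_forall fun y hy => ?_)
    rw [slope_def_field]
    exact div_nonneg (sub_nonneg.2 (hmono.monotone (le_of_lt hy))) (sub_nonneg.2 (le_of_lt hy))
  -- integral of f over (v, ∞)
  have hfint : IntegrableOn f (Set.Ioi v) :=
    integrableOn_Ioi_deriv_of_nonneg hF.continuousWithinAt (fun x _ => hdens x)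
      (fun x _ => fnonneg x) htop
  have hfval : ∫ x in Set.Ioi v, f x = 1 - p := by
    rw [integral_Ioi_of_hasDerivAt_of_nonneg hF.continuousWithinAt (fun x _ => hdens x)
      (fun x _ => fnonneg x) htop, hv]
  rw [hsinf1] at hint ⊢
  rw [hsinf2]
  -- translation change of variables
  have hmp : MeasurePreserving (fun y : ℝ => y + u) volume volume :=
    measurePreserving_add_right volume u
  have hemb : MeasurableEmbedding (fun y : ℝ => y + u) :=
    (MeasurableEquiv.addRight u).measurableEmbedding
  have hpre : (fun y : ℝ => y + u) ⁻¹' Set.Ioi v = Set.Ioi (v - u) := by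
    ext y; simp [sub_lt_iff_lt_add]
  have htrans : ∫ y in Set.Ioi (v - u), y * f (u + y)
      = ∫ x in Set.Ioi v, (x - u) * f x := by
    have := hmp.setIntegral_preimage_emb hemb (fun x => (x - u) * f x) (Set.Ioi v)
    rw [hpre] at this
    rw [← this]
    refine setIntegral_congr_fun measurableSet_Ioi fun y _ => ?_
    simp [add_comm u y]
  -- linearity
  have hsub : ∫ x in Set.Ioi v, (x - u) * f x
      = (∫ x in Set.Ioi v, x * f x) - u * (1 - p) := by
    have : ∀ x, (x - u) * f x = x * f x - u * f x := fun x => by ring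
    simp_rw [this]
    rw [integral_sub hint (hfint.const_mul u), integral_const_mul, hfval]
  -- simplify the CVaR coefficient
  have hcoef : (1 : ℝ) - (1 - (1 - p) / (1 - pu)) = (1 - p) / (1 - pu) := by ring
  have hintegrand : ∀ y : ℝ, y * (f (u + y) / (1 - pu)) = (y * f (u + y)) / (1 - pu) :=
    fun y => by ring
  simp_rw [hintegrand]
  rw [integral_div, htrans, hsub, hcoef]
  field_simp
  ring
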